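/- Let C be a nontrivial commutative unital ring and G a semigroup with zero. Then there exist a unital C-algebra R and a minimal C-linear trace t : \overline{CG} → R which is normalized (i.e., t(π(1·g)) ∈ {0,1} for every g ∈ G) if and only if G has at most one ~-equivalence class other than the class of 0. -/

import Mathlib

/-- The one-step relation: `x = a*b` and `y = b*a`. -/
def simStep {G : Type*} [Mul G] (x y : G) : Prop := ∃ a b : G, x = a * b ∧ y = b * a

/-- The relation `~` on a semigroup: the reflexive-transitive closure of `simStep`. -/
def sim {G : Type*} [Mul G] : G → G → Prop := Relation.ReflTransGen simStep

theorem sim_equiv {G : Type*} [Mul G] : Equivalence (sim (G := G)) :=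
  ⟨fun _ => Relation.ReflTransGen.refl,
   fun h => (@Relation.ReflTransGen.stdSymm _ _
      ⟨fun _ _ ⟨a, b, h1, h2⟩ => ⟨b, a, h2, h1⟩⟩).symm _ _ h,
   fun h1 h2 => Relation.ReflTransGen.trans h1 h2⟩

/-- The setoid on `G` given by `~`. -/
def simSetoid (G : Type*) [Mul G] : Setoid G := ⟨sim, sim_equiv⟩

/-- The additive subgroup `[A,A]` generated by commutators. -/
def commutatorSubgroup (A : Type*) [NonUnitalNonAssocRing A] : AddSubgroup A :=
  AddSubgroup.closure {x | ∃ a b : A, x = a * b - b * a}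

/-- The ideal `I₀` of the semigroup ring `CG` consisting of functions supported in `{0}`. -/
noncomputable def I0 (C G : Type*) [CommRing C] [SemigroupWithZero G] :
    TwoSidedIdeal (MonoidAlgebra C G) :=
  TwoSidedIdeal.mk' {f : MonoidAlgebra C G | ∀ g : G, g ≠ 0 → f.coeff g = 0}
    (fun _ _ => rfl)
    (fun {x y} hx hy g hg => by
      show (x + y).coeff g = 0
      rw [MonoidAlgebra.coeff_add, Finsupp.add_apply, hx g hg, hy g hg, add_zero])
    (fun {x} hx g hg => by
      show (-x).coeff g = 0
      rw [MonoidAlgebra.coeff_neg, Finsupp.neg_apply, hx g hg, neg_zero])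
    (fun {x y} hy g hg => by
      classical
      rw [MonoidAlgebra.coeff_mul]
      rw [Finsupp.sum]
      refine Finset.sum_eq_zero fun a _ => ?_
      rw [Finsupp.sum]
      refine Finset.sum_eq_zero fun b hb => ?_
      have hb0 : b = 0 := by
        by_contra h
        exact Finsupp.mem_support_iff.mp hb (hy b h)
      subst hb0
      rw [mul_zero, if_neg fun h => hg h.symm])
    (fun {x y} hx g hg => by
      classical
      rw [MonoidAlgebra.coeff_mul]
      rw [Finsupp.sum]
      refine Finset.sum_eq_zero fun a ha => ?_
      rw [Finsupp.sum]
      refine Finset.sum_eq_zero fun b _ => ?_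
      have ha0 : a = 0 := by
        by_contra h
        exact Finsupp.mem_support_iff.mp ha (hx a h)
      subst ha0
      rw [zero_mul, if_neg fun h => hg h.symm])

/-- The contracted semigroup ring `\overline{CG} = CG / I₀`. -/
abbrev ContractedSemigroupRing (C G : Type*) [CommRing C] [SemigroupWithZero G] :=
  (I0 C G).ringCon.Quotient

/-- The quotient map `π : CG → \overline{CG}`. -/
noncomputable def toCSR (C G : Type*) [CommRing C] [SemigroupWithZero G]
    (f : MonoidAlgebra C G) : ContractedSemigroupRing C G := f

/-- The map `f ↦ ∑_g f(g) • δ(g)` from `CG` to `R`. -/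
def elemSum (C : Type*) {G R : Type*} [CommRing C] [SemigroupWithZero G]
    [AddCommMonoid R] [Module C R] (δ : G → R) (f : MonoidAlgebra C G) : R :=
  f.coeff.sum fun g c => c • δ g

universe u v

/-- A witness for a normalized minimal `C`-linear trace on `\overline{CG}` with values in
some unital `C`-algebra `R`. -/
structure NormalizedMinimalTraceWitness (C : Type u) (G : Type v)
    [CommRing C] [SemigroupWithZero G] : Type (max u v + 1) where
  R : Type (max u v)
  [instRing : Ring R]
  [instAlgebra : Algebra C R]
  t : ContractedSemigroupRing C G → R
  map_add : ∀ x y : ContractedSemigroupRing C G, t (x + y) = t x + t y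
  map_comm : ∀ x y : ContractedSemigroupRing C G, t (x * y) = t (y * x)
  map_smul : ∀ (c : C) (f : MonoidAlgebra C G),
    t (toCSR C G (c • f)) = c • t (toCSR C G f)
  minimal : ∀ x : ContractedSemigroupRing C G, t x = 0 →
    x ∈ commutatorSubgroup (ContractedSemigroupRing C G)
  normalized : ∀ g : G, t (toCSR C G (MonoidAlgebra.single g 1)) = 0 ∨
    t (toCSR C G (MonoidAlgebra.single g 1)) = 1


section Aux

open MonoidAlgebra

variable (C : Type u) (G : Type v) [CommRing C] [SemigroupWithZero G]

/-- Indicator function of a set `S ⊆ G` with values in `C`. -/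
noncomputable def simInd (S : Set G) (g : G) : C := Set.indicator S (fun _ => (1 : C)) g

lemma simInd_of_mem {S : Set G} {g : G} (h : g ∈ S) : simInd C G S g = 1 :=
  Set.indicator_of_mem h _

lemma simInd_of_not_mem {S : Set G} {g : G} (h : g ∉ S) : simInd C G S g = 0 :=
  Set.indicator_of_notMem h _

lemma simInd_congr {S : Set G} (hS : ∀ k l : G, sim k l → (k ∈ S ↔ l ∈ S))
    {k l : G} (h : sim k l) : simInd C G S k = simInd C G S l := by
  by_cases hk : k ∈ S
  · rw [simInd_of_mem C G hk, simInd_of_mem C G ((hS k l h).mp hk)]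
  · rw [simInd_of_not_mem C G hk, simInd_of_not_mem C G (fun hl => hk ((hS k l h).mpr hl))]

/-- The additive map `f ↦ ∑_g f(g)·[g ∈ S]` on the semigroup ring. -/
noncomputable def phiAux (S : Set G) : MonoidAlgebra C G →+ C where
  toFun f := f.coeff.sum fun g c => c * simInd C G S g
  map_zero' := Finsupp.sum_zero_index
  map_add' x y := Finsupp.sum_add_index' (h := fun g c => c * simInd C G S g)
    (fun g => zero_mul (simInd C G S g)) (fun g c d => add_mul c d (simInd C G S g))

lemma phiAux_apply (S : Set G) (f : MonoidAlgebra C G) :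
    phiAux C G S f = f.coeff.sum fun g c => c * simInd C G S g := by rfl

lemma phiAux_single (S : Set G) (g : G) (c : C) :
    phiAux C G S (MonoidAlgebra.single g c) = c * simInd C G S g := by
  rw [phiAux_apply, MonoidAlgebra.coeff_single]
  exact Finsupp.sum_single_index (zero_mul _)

lemma phiAux_smul (S : Set G) (c : C) (f : MonoidAlgebra C G) :
    phiAux C G S (c • f) = c * phiAux C G S f := by
  rw [phiAux_apply, phiAux_apply, MonoidAlgebra.coeff_smul,
    Finsupp.sum_smul_index (h := fun g a => a * simInd C G S g) (fun i => zero_mul _),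
    Finsupp.mul_sum]
  exact Finsupp.sum_congr fun g _ => (mul_assoc c (f.coeff g) _)

lemma phiAux_trace (S : Set G) (hS : ∀ k l : G, sim k l → (k ∈ S ↔ l ∈ S))
    (x y : MonoidAlgebra C G) : phiAux C G S (x * y) = phiAux C G S (y * x) := by
  rw [MonoidAlgebra.mul_def, MonoidAlgebra.mul_def, map_finsuppSum, map_finsuppSum]
  simp only [map_finsuppSum, phiAux_single]
  rw [Finsupp.sum_comm]
  refine Finsupp.sum_congr fun a _ => Finsupp.sum_congr fun b _ => ?_
  have hind : simInd C G S (a * b) = simInd C G S (b * a) :=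
    simInd_congr C G hS (Relation.ReflTransGen.single ⟨a, b, rfl, rfl⟩)
  rw [hind]
  ring

lemma mem_I0_iff (f : MonoidAlgebra C G) :
    f ∈ I0 C G ↔ ∀ g : G, g ≠ 0 → f.coeff g = 0 := by
  refine (TwoSidedIdeal.mem_mk' ..).trans ?_
  rfl

lemma phiAux_eq_zero_of_mem_I0 {S : Set G} (hS0 : (0 : G) ∉ S) {f : MonoidAlgebra C G}
    (hf : f ∈ I0 C G) : phiAux C G S f = 0 := by
  rw [mem_I0_iff] at hf
  rw [phiAux_apply, Finsupp.sum]
  refine Finset.sum_eq_zero fun g _ => ?_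
  by_cases hgS : g ∈ S
  · have hg0 : g ≠ 0 := by rintro rfl; exact hS0 hgS
    rw [hf g hg0, zero_mul]
  · rw [simInd_of_not_mem C G hgS, mul_zero]

lemma toCSR_add (f g : MonoidAlgebra C G) :
    toCSR C G (f + g) = toCSR C G f + toCSR C G g := rfl

lemma toCSR_mul (f g : MonoidAlgebra C G) :
    toCSR C G (f * g) = toCSR C G f * toCSR C G g := rfl

lemma toCSR_sub (f g : MonoidAlgebra C G) :
    toCSR C G (f - g) = toCSR C G f - toCSR C G g := rfl

lemma toCSR_zero : toCSR C G 0 = 0 := rfl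

lemma toCSR_surjective : ∀ x : ContractedSemigroupRing C G, ∃ f, x = toCSR C G f :=
  fun x => Quotient.inductionOn' x fun f => ⟨f, rfl⟩

lemma toCSR_eq_zero {f : MonoidAlgebra C G} (hf : f ∈ I0 C G) : toCSR C G f = 0 := by
  have h1 : (I0 C G).ringCon f 0 := ((I0 C G).rel_iff f 0).mpr (by simpa using hf)
  have h2 : (f : (I0 C G).ringCon.Quotient) = ((0 : MonoidAlgebra C G) : _) :=
    (RingCon.eq _).mpr h1
  exact h2

lemma single_zero_mem_I0 (c : C) : MonoidAlgebra.single (0 : G) c ∈ I0 C G := by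
  rw [mem_I0_iff]
  intro g hg
  exact Finsupp.single_eq_of_ne' (fun h => hg h.symm)

/-- `phiAux` descends to the contracted semigroup ring. -/
noncomputable def phiQ (S : Set G) (hS0 : (0 : G) ∉ S) :
    ContractedSemigroupRing C G →+ C :=
  AddMonoidHom.mk'
    (fun x => Quotient.liftOn' x (phiAux C G S) (fun a b hab => by
      have h1 : a - b ∈ I0 C G := ((I0 C G).rel_iff a b).mp hab
      have h2 := phiAux_eq_zero_of_mem_I0 C G hS0 h1
      rw [map_sub] at h2
      exact sub_eq_zero.mp h2))
    (fun x y => Quotient.inductionOn₂' x y fun a b => map_add (phiAux C G S) a b)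

lemma phiQ_toCSR (S : Set G) (hS0 : (0 : G) ∉ S) (f : MonoidAlgebra C G) :
    phiQ C G S hS0 (toCSR C G f) = phiAux C G S f := rfl

lemma phiQ_eq_zero_of_mem_commutator (S : Set G) (hS0 : (0 : G) ∉ S)
    (hS : ∀ k l : G, sim k l → (k ∈ S ↔ l ∈ S))
    {x : ContractedSemigroupRing C G} (hx : x ∈ commutatorSubgroup (ContractedSemigroupRing C G)) :
    phiQ C G S hS0 x = 0 := by
  have hle : commutatorSubgroup (ContractedSemigroupRing C G) ≤ (phiQ C G S hS0).ker := by
    rw [commutatorSubgroup]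
    refine AddSubgroup.closure_le _ |>.mpr ?_
    rintro z ⟨a, b, rfl⟩
    obtain ⟨a', rfl⟩ := toCSR_surjective C G a
    obtain ⟨b', rfl⟩ := toCSR_surjective C G b
    rw [SetLike.mem_coe, AddMonoidHom.mem_ker, ← toCSR_mul, ← toCSR_mul, ← toCSR_sub,
      phiQ_toCSR, map_sub, phiAux_trace C G S hS, sub_self]
  exact AddMonoidHom.mem_ker.mp (hle hx)

lemma toCSR_single_sub_single_mem (c : C) {k l : G} (h : sim k l) :
    toCSR C G (MonoidAlgebra.single k c) - toCSR C G (MonoidAlgebra.single l c) ∈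
      commutatorSubgroup (ContractedSemigroupRing C G) := by
  induction h with
  | refl => rw [sub_self]; exact (commutatorSubgroup _).zero_mem
  | tail _ step ih =>
    obtain ⟨a, b, hm, hl⟩ := step
    subst hm; subst hl
    have e1 : MonoidAlgebra.single (a * b) c
        = MonoidAlgebra.single a c * MonoidAlgebra.single b (1 : C) := by
      rw [MonoidAlgebra.single_mul_single, mul_one]
    have e2 : MonoidAlgebra.single (b * a) c
        = MonoidAlgebra.single b (1 : C) * MonoidAlgebra.single a c := by
      rw [MonoidAlgebra.single_mul_single, one_mul]
    have key : toCSR C G (MonoidAlgebra.single (a * b) c)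
        - toCSR C G (MonoidAlgebra.single (b * a) c) ∈
        commutatorSubgroup (ContractedSemigroupRing C G) := by
      rw [e1, e2, toCSR_mul, toCSR_mul]
      exact AddSubgroup.subset_closure ⟨_, _, rfl⟩
    have := (commutatorSubgroup (ContractedSemigroupRing C G)).add_mem ih key
    rwa [sub_add_sub_cancel] at this

lemma toCSR_single_mem_of_sim_zero {k : G} (h : sim k 0) (c : C) :
    toCSR C G (MonoidAlgebra.single k c) ∈ commutatorSubgroup (ContractedSemigroupRing C G) := by
  have h1 := toCSR_single_sub_single_mem C G c h
  rwa [toCSR_eq_zero C G (single_zero_mem_I0 C G c), sub_zero] at h1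

lemma toCSR_mem_of_all_sim_zero (hall : ∀ k : G, sim k 0) (f : MonoidAlgebra C G) :
    toCSR C G f ∈ commutatorSubgroup (ContractedSemigroupRing C G) := by
  induction f using MonoidAlgebra.induction with
  | zero => exact (commutatorSubgroup (ContractedSemigroupRing C G)).zero_mem
  | single_add a c f' ha hc ih =>
    exact (commutatorSubgroup _).add_mem (toCSR_single_mem_of_sim_zero C G (hall a) c) ih

lemma key_sub (hyp : ∀ g h : G, ¬ sim g 0 → ¬ sim h 0 → sim g h)
    {g₀ : G} (hg₀ : ¬ sim g₀ 0) (f : MonoidAlgebra C G) :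
    toCSR C G f - toCSR C G (MonoidAlgebra.single g₀
      (phiAux C G {k : G | ¬ sim k 0} f)) ∈
      commutatorSubgroup (ContractedSemigroupRing C G) := by
  set S : Set G := {k : G | ¬ sim k 0} with hSdef
  induction f using MonoidAlgebra.induction with
  | zero =>
    show toCSR C G (0 : MonoidAlgebra C G)
        - toCSR C G (MonoidAlgebra.single g₀ (phiAux C G S (0 : MonoidAlgebra C G))) ∈ _
    rw [map_zero, MonoidAlgebra.single_zero, toCSR_zero, sub_zero]
    exact (commutatorSubgroup (ContractedSemigroupRing C G)).zero_mem
  | single_add a c f' ha hc ih =>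
    have hphi : phiAux C G S (MonoidAlgebra.single a c + f')
        = c * simInd C G S a + phiAux C G S f' := by
      have h1 : phiAux C G S (MonoidAlgebra.single a c + f')
          = phiAux C G S (MonoidAlgebra.single a c) + phiAux C G S f' := map_add _ _ _
      rw [h1, phiAux_single]
    have e1 : toCSR C G (MonoidAlgebra.single a c + f')
        = toCSR C G (MonoidAlgebra.single a c) + toCSR C G f' := rfl
    have e2 : toCSR C G (MonoidAlgebra.single g₀ (phiAux C G S (MonoidAlgebra.single a c + f')))
        = toCSR C G (MonoidAlgebra.single g₀ (c * simInd C G S a))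
          + toCSR C G (MonoidAlgebra.single g₀ (phiAux C G S f')) := by
      rw [hphi, MonoidAlgebra.single_add]
      rfl
    have hA : toCSR C G (MonoidAlgebra.single a c)
        - toCSR C G (MonoidAlgebra.single g₀ (c * simInd C G S a)) ∈
        commutatorSubgroup (ContractedSemigroupRing C G) := by
      by_cases haS : a ∈ S
      · rw [simInd_of_mem C G haS, mul_one]
        exact toCSR_single_sub_single_mem C G c (hyp a g₀ haS hg₀)
      · have ha0 : sim a 0 := not_not.mp haS
        rw [simInd_of_not_mem C G haS, mul_zero, MonoidAlgebra.single_zero, toCSR_zero,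
          sub_zero]
        exact toCSR_single_mem_of_sim_zero C G ha0 c
    have hB : toCSR C G f'
        - toCSR C G (MonoidAlgebra.single g₀ (phiAux C G S f')) ∈
        commutatorSubgroup (ContractedSemigroupRing C G) := ih
    have hcomb := (commutatorSubgroup (ContractedSemigroupRing C G)).add_mem hA hB
    rw [sub_add_sub_comm] at hcomb
    rw [← e1, ← e2] at hcomb
    exact hcomb

end Aux

/-- There exist a unital `C`-algebra `R` and a normalized minimal
`C`-linear trace `t : \overline{CG} → R` if and only if `G` has at most one
`~`-equivalence class other than the class of `0`. -/
theorem semigroupRing_normalized_minimal_trace_iff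
    (C : Type u) (G : Type v) [CommRing C] [Nontrivial C] [SemigroupWithZero G] :
    Nonempty (NormalizedMinimalTraceWitness C G) ↔
      ∀ g h : G, ¬ sim g 0 → ¬ sim h 0 → sim g h := by
  constructor
  · rintro ⟨W⟩ g h hg hh
    letI := W.instRing
    letI := W.instAlgebra
    have ht0 : W.t 0 = 0 := by
      have h00 := W.map_add 0 0
      rw [add_zero] at h00
      exact (left_eq_add.mp h00)
    have htneg : ∀ y, W.t (-y) = - W.t y := by
      intro y
      have hy := W.map_add y (-y)
      rw [add_neg_cancel, ht0] at hy
      exact (neg_eq_of_add_eq_zero_right hy.symm).symm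
    have htsub : ∀ x y, W.t (x - y) = W.t x - W.t y := by
      intro x y
      rw [sub_eq_add_neg, sub_eq_add_neg, W.map_add, htneg]
    have hsim : ∀ {k l : G}, sim k l →
        W.t (toCSR C G (MonoidAlgebra.single k (1 : C)))
          = W.t (toCSR C G (MonoidAlgebra.single l (1 : C))) := by
      intro k l hkl
      induction hkl with
      | refl => rfl
      | tail _ step ih =>
        obtain ⟨a, b, hm, hl⟩ := step
        subst hm; subst hl
        have e1 : MonoidAlgebra.single (a * b) (1 : C)
            = MonoidAlgebra.single a (1 : C) * MonoidAlgebra.single b (1 : C) := by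
          rw [MonoidAlgebra.single_mul_single, one_mul]
        have e2 : MonoidAlgebra.single (b * a) (1 : C)
            = MonoidAlgebra.single b (1 : C) * MonoidAlgebra.single a (1 : C) := by
          rw [MonoidAlgebra.single_mul_single, one_mul]
        rw [ih, e1, e2, toCSR_mul, toCSR_mul]
        exact W.map_comm _ _
    have hone : ∀ {k : G}, ¬ sim k 0 →
        W.t (toCSR C G (MonoidAlgebra.single k (1 : C))) = 1 := by
      intro k hk
      have hS0 : (0 : G) ∉ {m : G | sim m k} := fun h0 => hk (sim_equiv.symm h0)
      have hSsim : ∀ a b : G, sim a b → (a ∈ {m : G | sim m k} ↔ b ∈ {m : G | sim m k}) :=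
        fun a b hab => ⟨fun hx => sim_equiv.trans (sim_equiv.symm hab) hx,
          fun hx => sim_equiv.trans hab hx⟩
      rcases W.normalized k with h0 | h1
      · exfalso
        have hm := W.minimal _ h0
        have hz := phiQ_eq_zero_of_mem_commutator C G _ hS0 hSsim hm
        rw [phiQ_toCSR, phiAux_single, simInd_of_mem C G (show k ∈ {m : G | sim m k} from sim_equiv.refl k), mul_one] at hz
        exact one_ne_zero hz
      · exact h1
    by_contra hgh
    have h1 : W.t (toCSR C G (MonoidAlgebra.single g (1 : C)
        - MonoidAlgebra.single h (1 : C))) = 0 := by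
      rw [toCSR_sub, htsub, hone hg, hone hh, sub_self]
    have h2 := W.minimal _ h1
    have hS0 : (0 : G) ∉ {m : G | sim m g} := fun h0 => hg (sim_equiv.symm h0)
    have hSsim : ∀ a b : G, sim a b → (a ∈ {m : G | sim m g} ↔ b ∈ {m : G | sim m g}) :=
      fun a b hab => ⟨fun hx => sim_equiv.trans (sim_equiv.symm hab) hx,
        fun hx => sim_equiv.trans hab hx⟩
    have hz := phiQ_eq_zero_of_mem_commutator C G _ hS0 hSsim h2
    rw [phiQ_toCSR, map_sub, phiAux_single, phiAux_single,
      simInd_of_mem C G (show g ∈ {m : G | sim m g} from sim_equiv.refl g),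
      simInd_of_not_mem C G (show h ∉ {m : G | sim m g} from fun hx => hgh (sim_equiv.symm hx)), mul_one, mul_zero,
      sub_zero] at hz
    exact one_ne_zero hz
  · intro hyp
    have hS0 : (0 : G) ∉ {k : G | ¬ sim k 0} := fun h0 => h0 (sim_equiv.refl 0)
    have hSsim : ∀ k l : G, sim k l →
        (k ∈ {m : G | ¬ sim m 0} ↔ l ∈ {m : G | ¬ sim m 0}) := by
      intro k l hkl
      constructor
      · exact fun hk hl0 => hk (sim_equiv.trans hkl hl0)
      · exact fun hl hk0 => hl (sim_equiv.trans (sim_equiv.symm hkl) hk0)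
    refine ⟨{
      R := ULift.{v} C
      instRing := inferInstance
      instAlgebra := inferInstance
      t := fun x => ULift.up (phiQ C G {k : G | ¬ sim k 0} hS0 x)
      map_add := fun x y => by rw [map_add]; rfl
      map_comm := fun x y => by
        obtain ⟨a, rfl⟩ := toCSR_surjective C G x
        obtain ⟨b, rfl⟩ := toCSR_surjective C G y
        rw [← toCSR_mul, ← toCSR_mul, phiQ_toCSR, phiQ_toCSR,
          phiAux_trace C G _ hSsim]
      map_smul := fun c f => by
        rw [phiQ_toCSR, phiQ_toCSR, phiAux_smul]
        rfl
      minimal := fun x hx => by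
        obtain ⟨f, rfl⟩ := toCSR_surjective C G x
        have hphi : phiAux C G {k : G | ¬ sim k 0} f = 0 := by
          have h' := congrArg ULift.down hx
          dsimp only at h'
          rwa [phiQ_toCSR] at h'
        by_cases hall : ∀ k : G, sim k 0
        · exact toCSR_mem_of_all_sim_zero C G hall f
        · push_neg at hall
          obtain ⟨g₀, hg₀⟩ := hall
          have hkey := key_sub C G hyp hg₀ f
          rwa [hphi, MonoidAlgebra.single_zero, toCSR_zero, sub_zero] at hkey
      normalized := fun g => by
        by_cases hg : g ∈ {k : G | ¬ sim k 0}
        · right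
          rw [phiQ_toCSR, phiAux_single, simInd_of_mem C G hg, mul_one]
          rfl
        · left
          rw [phiQ_toCSR, phiAux_single, simInd_of_not_mem C G hg, mul_zero]
          rfl }⟩
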